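/- Let m > n ≥ 3 be integers, let E_n = {x ∈ ℝ^n : |x| ≥ 1} and E_m = {z ∈ ℝ^m : |z| ≥ 1}. Then there exists a constant C > 0 such that for every real t > 0 and every h ∈ L²(E_n), the function 𝒯h defined by 𝒯h(z) = |z|^{-(m-2)} ∫_{E_n} ( t / (t + |x| + |z|)^{n+1} ) |h(x)| dx satisfies ‖𝒯h‖_{L²(E_m)} ≤ C ‖h‖_{L²(E_n)}, with C independent of t. -/

import Mathlib

open MeasureTheory Real
open scoped ENNReal NNReal

private lemma kernel_le_aux (n : ℕ) {t a b : ℝ} (ht : 0 < t) (ha : 0 ≤ a) (hb : 1 ≤ b) :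
    t / (t + a + b) ^ (n + 1) ≤ ((a + b) ^ n)⁻¹ := by
  have hab : 0 < a + b := by linarith
  have h1 : t * (a + b) ^ n ≤ (t + a + b) ^ (n + 1) := by
    calc t * (a + b) ^ n ≤ (t + a + b) * (t + a + b) ^ n := by
          apply mul_le_mul (by linarith) (pow_le_pow_left₀ (by positivity) (by linarith) n)
            (by positivity) (by linarith)
      _ = (t + a + b) ^ (n + 1) := by ring
  calc t / (t + a + b) ^ (n + 1) ≤ t / (t * (a + b) ^ n) := by
        gcongr
      _ = ((a + b) ^ n)⁻¹ := by
        have h2 : (a + b) ^ n ≠ 0 := by positivity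
        field_simp

private lemma sq_kernel_le_aux (n : ℕ) (hn : 1 ≤ n) {a R : ℝ} (ha : 0 ≤ a) (hR : 1 ≤ R) :
    (((a + R) ^ n)⁻¹) ^ 2 ≤ ((1 + a) ^ (n + 1))⁻¹ * (R ^ (n - 1))⁻¹ := by
  have hR0 : (0:ℝ) < R := by linarith
  have h1 : (1 + a) ^ (n + 1) * R ^ (n - 1) ≤ (a + R) ^ (n + 1) * (a + R) ^ (n - 1) := by
    apply mul_le_mul (pow_le_pow_left₀ (by positivity) (by linarith) _)
      (pow_le_pow_left₀ (by linarith) (by linarith) _) (by positivity) (by positivity)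
  have h2 : (((a + R) ^ n) ^ 2 : ℝ) = (a + R) ^ (n + 1) * (a + R) ^ (n - 1) := by
    rw [← pow_mul, ← pow_add]
    congr 1
    omega
  rw [inv_pow, h2, ← mul_inv]
  exact inv_anti₀ (by positivity) h1

private lemma rpow_decay_aux (m n : ℕ) (hn : 3 ≤ n) (hmn : n < m) {R : ℝ} (hR : 1 ≤ R) :
    (R ^ (m - 2))⁻¹ * ((R ^ (n - 1))⁻¹ ^ ((1:ℝ)/2)) ≤
      2 ^ (((m:ℝ) - 2) + ((n:ℝ) - 1) / 2) *
        (1 + R) ^ (-(((m:ℝ) - 2) + ((n:ℝ) - 1) / 2)) := by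
  set r : ℝ := ((m:ℝ) - 2) + ((n:ℝ) - 1) / 2 with hr
  have hR0 : (0:ℝ) < R := by linarith
  have hm4 : (4:ℝ) ≤ (m:ℝ) := by exact_mod_cast (by omega : 4 ≤ m)
  have hn3 : (3:ℝ) ≤ (n:ℝ) := by exact_mod_cast hn
  have hr0 : 0 ≤ r := by rw [hr]; linarith
  have hcm : ((m - 2 : ℕ) : ℝ) = (m:ℝ) - 2 := by
    push_cast [Nat.cast_sub (by omega : 2 ≤ m)]; ring
  have hcn : ((n - 1 : ℕ) : ℝ) = (n:ℝ) - 1 := by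
    push_cast [Nat.cast_sub (by omega : 1 ≤ n)]; ring
  have e1 : (R ^ (m - 2) : ℝ)⁻¹ = R ^ (-((m:ℝ) - 2)) := by
    rw [← Real.rpow_natCast R (m - 2), hcm, ← Real.rpow_neg hR0.le]
  have e2 : ((R ^ (n - 1) : ℝ)⁻¹) ^ ((1:ℝ)/2) = R ^ (-(((n:ℝ) - 1)/2)) := by
    rw [← Real.rpow_natCast R (n - 1), hcn, ← Real.rpow_neg hR0.le,
      ← Real.rpow_mul hR0.le]
    congr 1
    ring
  have hL : (R ^ (m - 2))⁻¹ * ((R ^ (n - 1))⁻¹ ^ ((1:ℝ)/2)) = R ^ (-r) := by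
    rw [e1, e2, ← Real.rpow_add hR0]
    congr 1
    rw [hr]; ring
  rw [hL]
  have key : ((2*R) : ℝ) ^ (-r) ≤ (1 + R) ^ (-r) :=
    Real.rpow_le_rpow_of_nonpos (by linarith) (by linarith) (by linarith)
  calc R ^ (-r) = 2 ^ r * ((2:ℝ) ^ (-r) * R ^ (-r)) := by
        rw [← mul_assoc, ← Real.rpow_add (by norm_num : (0:ℝ) < 2)]
        simp
    _ = 2 ^ r * ((2*R) ^ (-r)) := by rw [Real.mul_rpow (by norm_num) hR0.le]
    _ ≤ 2 ^ r * ((1+R) ^ (-r)) := by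
        apply mul_le_mul_of_nonneg_left key (by positivity)

set_option maxHeartbeats 1000000 in
/-- L² boundedness of the operator 𝒯 of Section 3.1, uniformly in `t`: for integers
`m > n ≥ 3`, `E_n = {x ∈ ℝ^n : |x| ≥ 1}` and `E_m = {z ∈ ℝ^m : |z| ≥ 1}`, there is `C > 0`
such that for every `t > 0` and every `h ∈ L²(E_n)`,
`‖𝒯h‖_{L²(E_m)} ≤ C ‖h‖_{L²(E_n)}` where
`𝒯h(z) = |z|^{-(m-2)} ∫_{E_n} (t/(t+|x|+|z|)^{n+1}) |h(x)| dx`. -/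
theorem opT_L2_bounded (m n : ℕ) (hn : 3 ≤ n) (hmn : n < m) :
    ∃ C > 0, ∀ t : ℝ, 0 < t → ∀ h : EuclideanSpace ℝ (Fin n) → ℝ,
      MemLp h 2 (volume.restrict {x : EuclideanSpace ℝ (Fin n) | 1 ≤ ‖x‖}) →
      eLpNorm
          (fun z : EuclideanSpace ℝ (Fin m) =>
            (‖z‖ ^ (m - 2))⁻¹ *
              ∫ x in {x : EuclideanSpace ℝ (Fin n) | 1 ≤ ‖x‖},
                (t / (t + ‖x‖ + ‖z‖) ^ (n + 1)) * |h x|) 2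
          (volume.restrict {z : EuclideanSpace ℝ (Fin m) | 1 ≤ ‖z‖}) ≤
        ENNReal.ofReal C *
          eLpNorm h 2 (volume.restrict {x : EuclideanSpace ℝ (Fin n) | 1 ≤ ‖x‖}) := by
  set En : Set (EuclideanSpace ℝ (Fin n)) := {x | 1 ≤ ‖x‖} with hEn
  set Em : Set (EuclideanSpace ℝ (Fin m)) := {z | 1 ≤ ‖z‖} with hEm
  set μ : Measure (EuclideanSpace ℝ (Fin n)) := volume.restrict En with hμ
  set ν : Measure (EuclideanSpace ℝ (Fin m)) := volume.restrict Em with hν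
  set r : ℝ := ((m:ℝ) - 2) + ((n:ℝ) - 1) / 2 with hr
  have hm4 : (4:ℝ) ≤ (m:ℝ) := by exact_mod_cast (by omega : 4 ≤ m)
  have hn3 : (3:ℝ) ≤ (n:ℝ) := by exact_mod_cast hn
  have hr0 : 0 ≤ r := by rw [hr]; linarith
  -- the base integrable function on ℝⁿ
  have hAint : Integrable (fun x : EuclideanSpace ℝ (Fin n) => (1 + ‖x‖) ^ (-((n:ℝ) + 1))) := by
    apply integrable_one_add_norm
    rw [finrank_euclideanSpace_fin]
    linarith
  set A : ℝ := ∫ x : EuclideanSpace ℝ (Fin n), (1 + ‖x‖) ^ (-((n:ℝ) + 1)) with hA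
  have hA0 : 0 ≤ A := integral_nonneg fun x => Real.rpow_nonneg (by positivity) _
  -- the majorant on ℝᵐ and its L² norm
  set w : EuclideanSpace ℝ (Fin m) → ℝ := fun z => (1 + ‖z‖) ^ (-r) with hw
  have hwcont : Continuous w :=
    Continuous.rpow_const (continuous_const.add continuous_norm)
      (fun z => Or.inl (by positivity))
  have hwmem : MemLp w 2 ν := by
    rw [memLp_two_iff_integrable_sq hwcont.aestronglyMeasurable]
    have hsq : (fun z : EuclideanSpace ℝ (Fin m) => w z ^ 2) =
        fun z => (1 + ‖z‖) ^ (-(2 * r)) := by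
      funext z
      rw [hw, ← Real.rpow_natCast ((1 + ‖z‖) ^ (-r)) 2, ← Real.rpow_mul (by positivity)]
      congr 1
      push_cast
      ring
    rw [hsq]
    apply Integrable.restrict
    apply integrable_one_add_norm
    rw [finrank_euclideanSpace_fin]
    rw [hr]; linarith
  set D : ℝ≥0∞ := eLpNorm w 2 ν with hD
  have hDne : D ≠ ⊤ := hwmem.eLpNorm_ne_top
  refine ⟨(A ^ ((1:ℝ)/2) * 2 ^ r) * D.toReal + 1, by positivity, ?_⟩
  intro t ht h hh
  -- the L² norm of h as a real number
  set N : ℝ := (∫ x in En, |h x| ^ (2:ℝ) ∂volume) ^ ((1:ℝ)/2) with hNdef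
  have hN0 : 0 ≤ N := Real.rpow_nonneg
    (integral_nonneg fun x => Real.rpow_nonneg (abs_nonneg _) _) _
  have hNeq : eLpNorm h 2 μ = ENNReal.ofReal N := by
    rw [hh.eLpNorm_eq_integral_rpow_norm two_ne_zero ENNReal.ofNat_ne_top]
    congr 1
    rw [hNdef]
    norm_num [Real.norm_eq_abs]
    rfl
  -- pointwise bound on the operator
  have habs : MemLp (fun x => |h x|) 2 μ := by
    simpa [Real.norm_eq_abs] using hh.norm
  have hkey : ∀ z : EuclideanSpace ℝ (Fin m), 1 ≤ ‖z‖ →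
      (‖z‖ ^ (m - 2))⁻¹ * (∫ x in En, (t / (t + ‖x‖ + ‖z‖) ^ (n + 1)) * |h x|) ≤
        (A ^ ((1:ℝ)/2) * 2 ^ r * N) * w z := by
    intro z hz
    set R : ℝ := ‖z‖ with hRdef
    have hR0 : (0:ℝ) < R := by linarith
    set K : EuclideanSpace ℝ (Fin n) → ℝ := fun x => ((‖x‖ + R) ^ n)⁻¹ with hK
    have hKcont : Continuous K :=
      ((continuous_norm.add continuous_const).pow n).inv₀ fun x => pow_ne_zero _ (ne_of_gt (by simp only [Pi.add_apply]; linarith [norm_nonneg x]))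
    have hKnonneg : ∀ x, 0 ≤ K x := fun x => by positivity
    -- bound on K², and integrability
    have hKsq_bound : ∀ x : EuclideanSpace ℝ (Fin n),
        K x ^ 2 ≤ (1 + ‖x‖) ^ (-((n:ℝ) + 1)) * (R ^ (n - 1))⁻¹ := by
      intro x
      have hb := sq_kernel_le_aux n (by omega) (norm_nonneg x) hz
      have : ((1:ℝ) + ‖x‖) ^ (-((n:ℝ) + 1)) = (((1:ℝ) + ‖x‖) ^ (n + 1 : ℕ))⁻¹ := by
        rw [show -((n:ℝ) + 1) = -((n + 1 : ℕ) : ℝ) by push_cast; ring,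
          Real.rpow_neg (by positivity), Real.rpow_natCast]
      rw [this]
      exact hb
    have hGint : Integrable
        (fun x : EuclideanSpace ℝ (Fin n) =>
          (1 + ‖x‖) ^ (-((n:ℝ) + 1)) * (R ^ (n - 1))⁻¹) μ :=
      (hAint.restrict.mul_const _)
    have hKsq_int : Integrable (fun x => K x ^ 2) μ := by
      refine hGint.mono' ((hKcont.pow 2).aestronglyMeasurable) (ae_of_all _ fun x => ?_)
      rw [Real.norm_eq_abs, abs_of_nonneg (by positivity)]
      exact hKsq_bound x
    have hKmem : MemLp K 2 μ :=
      (memLp_two_iff_integrable_sq hKcont.aestronglyMeasurable).2 hKsq_int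
    -- integrability of K * |h|
    have hprod : Integrable (fun x => K x * |h x|) μ := by
      have := habs.smul (φ := K) hKmem
        (p := 2) (q := 2) (r := 1) (hpqr := ⟨by
          rw [inv_one]; exact ENNReal.inv_two_add_inv_two⟩)
      rw [← memLp_one_iff_integrable]
      exact this
    -- step 1 : replace the kernel by K
    have step1 : (∫ x in En, (t / (t + ‖x‖ + R) ^ (n + 1)) * |h x|) ≤
        ∫ x in En, K x * |h x| := by
      apply integral_mono_of_nonneg (ae_of_all _ fun x => by positivity) hprod
      apply ae_of_all
      intro x
      apply mul_le_mul_of_nonneg_right _ (abs_nonneg _)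
      exact kernel_le_aux n ht (norm_nonneg x) hz
    -- step 2 : Cauchy-Schwarz
    have conj : (2:ℝ).HolderConjugate 2 := Real.HolderConjugate.two_two
    have step2 : (∫ x in En, K x * |h x|) ≤
        (∫ x in En, K x ^ (2:ℝ)) ^ ((1:ℝ)/2) * (∫ x in En, |h x| ^ (2:ℝ)) ^ ((1:ℝ)/2) := by
      have := integral_mul_le_Lp_mul_Lq_of_nonneg conj
        (ae_of_all _ hKnonneg) (ae_of_all _ fun x => abs_nonneg (h x))
        (by rw [ENNReal.ofReal_ofNat]; exact hKmem)
        (by rw [ENNReal.ofReal_ofNat]; exact habs)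
      simpa using this
    -- step 3 : bound the L² norm of K
    have step3 : (∫ x in En, K x ^ (2:ℝ)) ≤ A * (R ^ (n - 1))⁻¹ := by
      have hpoweq : (fun x : EuclideanSpace ℝ (Fin n) => K x ^ (2:ℝ)) =
          fun x => K x ^ (2:ℕ) := by
        funext x
        rw [← Real.rpow_natCast (K x) 2]
        norm_num
      rw [hpoweq]
      calc (∫ x in En, K x ^ (2:ℕ)) ≤
          ∫ x in En, (1 + ‖x‖) ^ (-((n:ℝ) + 1)) * (R ^ (n - 1))⁻¹ := by
            apply integral_mono_of_nonneg (ae_of_all _ fun x => by positivity) hGint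
            exact ae_of_all _ fun x => hKsq_bound x
        _ = (∫ x in En, (1 + ‖x‖) ^ (-((n:ℝ) + 1))) * (R ^ (n - 1))⁻¹ :=
            integral_mul_const _ _
        _ ≤ A * (R ^ (n - 1))⁻¹ := by
            apply mul_le_mul_of_nonneg_right _ (by positivity)
            exact setIntegral_le_integral hAint
              (ae_of_all _ fun x => Real.rpow_nonneg (by positivity) _)
    have step4 : (∫ x in En, K x ^ (2:ℝ)) ^ ((1:ℝ)/2) ≤
        A ^ ((1:ℝ)/2) * ((R ^ (n - 1))⁻¹) ^ ((1:ℝ)/2) := by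
      rw [← Real.mul_rpow hA0 (by positivity)]
      apply Real.rpow_le_rpow (integral_nonneg fun x => Real.rpow_nonneg (hKnonneg x) _)
        step3 (by norm_num)
    -- combine
    have hI : (∫ x in En, (t / (t + ‖x‖ + R) ^ (n + 1)) * |h x|) ≤
        A ^ ((1:ℝ)/2) * ((R ^ (n - 1))⁻¹) ^ ((1:ℝ)/2) * N := by
      calc (∫ x in En, (t / (t + ‖x‖ + R) ^ (n + 1)) * |h x|) ≤ ∫ x in En, K x * |h x| := step1
        _ ≤ (∫ x in En, K x ^ (2:ℝ)) ^ ((1:ℝ)/2) * (∫ x in En, |h x| ^ (2:ℝ)) ^ ((1:ℝ)/2) := step2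
        _ ≤ A ^ ((1:ℝ)/2) * ((R ^ (n - 1))⁻¹) ^ ((1:ℝ)/2) * N := by
            apply mul_le_mul_of_nonneg_right step4
            exact Real.rpow_nonneg (integral_nonneg fun x => Real.rpow_nonneg (abs_nonneg _) _) _
    calc (‖z‖ ^ (m - 2))⁻¹ * (∫ x in En, (t / (t + ‖x‖ + ‖z‖) ^ (n + 1)) * |h x|) ≤
        (R ^ (m - 2))⁻¹ * (A ^ ((1:ℝ)/2) * ((R ^ (n - 1))⁻¹) ^ ((1:ℝ)/2) * N) := by
          apply mul_le_mul_of_nonneg_left hI (by positivity)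
      _ = (A ^ ((1:ℝ)/2) * N) * ((R ^ (m - 2))⁻¹ * ((R ^ (n - 1))⁻¹ ^ ((1:ℝ)/2))) := by ring
      _ ≤ (A ^ ((1:ℝ)/2) * N) * (2 ^ r * (1 + R) ^ (-r)) := by
          apply mul_le_mul_of_nonneg_left (rpow_decay_aux m n hn hmn hz) (by positivity)
      _ = (A ^ ((1:ℝ)/2) * 2 ^ r * N) * w z := by rw [hw]; ring
  -- nonnegativity of the operator
  have hTnonneg : ∀ z : EuclideanSpace ℝ (Fin m),
      0 ≤ (‖z‖ ^ (m - 2))⁻¹ * ∫ x in En, (t / (t + ‖x‖ + ‖z‖) ^ (n + 1)) * |h x| := by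
    intro z
    apply mul_nonneg (by positivity)
    apply integral_nonneg
    intro x
    have h1 : 0 < t + ‖x‖ + ‖z‖ := by
      have := norm_nonneg x; have := norm_nonneg z; linarith
    positivity
  -- conclude via eLpNorm monotonicity
  have hmono : eLpNorm
      (fun z : EuclideanSpace ℝ (Fin m) =>
        (‖z‖ ^ (m - 2))⁻¹ * ∫ x in En, (t / (t + ‖x‖ + ‖z‖) ^ (n + 1)) * |h x|) 2 ν ≤
      eLpNorm (fun z => (A ^ ((1:ℝ)/2) * 2 ^ r * N) * w z) 2 ν := by
    apply eLpNorm_mono_ae_real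
    have hmeas : MeasurableSet Em := (isClosed_le continuous_const continuous_norm).measurableSet
    filter_upwards [ae_restrict_mem hmeas] with z hz
    rw [Real.norm_eq_abs, abs_of_nonneg (hTnonneg z)]
    exact hkey z hz
  have hsmul : eLpNorm (fun z => (A ^ ((1:ℝ)/2) * 2 ^ r * N) * w z) 2 ν =
      ENNReal.ofReal (A ^ ((1:ℝ)/2) * 2 ^ r * N) * D := by
    have : (fun z => (A ^ ((1:ℝ)/2) * 2 ^ r * N) * w z) =
        (A ^ ((1:ℝ)/2) * 2 ^ r * N) • w := rfl
    rw [this, eLpNorm_const_smul, hD]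
    congr 1
    exact Real.enorm_eq_ofReal (by positivity)
  refine le_trans (hmono.trans_eq hsmul) ?_
  calc ENNReal.ofReal (A ^ ((1:ℝ)/2) * 2 ^ r * N) * D
      = ENNReal.ofReal (A ^ ((1:ℝ)/2) * 2 ^ r) * D * ENNReal.ofReal N := by
        rw [ENNReal.ofReal_mul (by positivity)]
        ring
    _ ≤ ENNReal.ofReal ((A ^ ((1:ℝ)/2) * 2 ^ r) * D.toReal + 1) * ENNReal.ofReal N := by
        apply mul_le_mul_left
        rw [← ENNReal.ofReal_toReal hDne, ← ENNReal.ofReal_mul (by positivity)]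
        apply ENNReal.ofReal_le_ofReal
        rw [ENNReal.toReal_ofReal ENNReal.toReal_nonneg]
        linarith
    _ = ENNReal.ofReal ((A ^ ((1:ℝ)/2) * 2 ^ r) * D.toReal + 1) * eLpNorm h 2 μ := by
        rw [hNeq]
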